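/- Let f be a piecewise contracting interval map on X satisfying the separation property and D ⊂ X̃. Then the lower box dimension of the attractor Λ of f is equal to zero, i.e. liminf_{ε→0⁺} (log ℓ(Λ,ε))/(log(1/ε)) = 0, where ℓ(Λ,ε) denotes the smallest number of intervals of diameter at most ε needed to cover Λ. -/

import Mathlib

open Set Filter Metric Topology

/-- A piecewise contracting interval map (PCIM) on the compact interval `X = [a,b]`:
there are `N ≥ 1` pairwise disjoint nonempty open (relative to `X`) subintervals
whose closures cover `X`, and `f` contracts with rate `lam ∈ (0,1)` on each piece. -/
structure PCIM where
  a : ℝ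
  b : ℝ
  hab : a < b
  N : ℕ
  hN : 1 ≤ N
  f : ℝ → ℝ
  lam : ℝ
  hlam₀ : 0 < lam
  hlam₁ : lam < 1
  piece : Fin N → Set ℝ
  piece_nonempty : ∀ i, (piece i).Nonempty
  piece_interval : ∀ i, ∃ c d : ℝ, piece i = Set.Ioo c d ∩ Set.Icc a b
  piece_disjoint : ∀ i j, i ≠ j → Disjoint (piece i) (piece j)
  cover : Set.Icc a b = ⋃ i, closure (piece i)
  mapsTo : Set.MapsTo f (Set.Icc a b) (Set.Icc a b)
  contract : ∀ i, ∀ x ∈ piece i, ∀ y ∈ piece i, |f x - f y| ≤ lam * |x - y|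

namespace PCIM

variable (P : PCIM)

/-- The underlying compact interval `X`. -/
def X : Set ℝ := Set.Icc P.a P.b

/-- `X* = ⋃ i, X_i`, the union of the contraction pieces. -/
def Xstar : Set ℝ := ⋃ i, P.piece i

/-- `Δ = X \ X*`, the set of boundaries of the contraction pieces. -/
def Delta : Set ℝ := P.X \ P.Xstar

/-- `X̃ = ⋂_{j ≥ 0} f⁻ʲ(X*)`, the points all of whose iterates are well defined. -/
def Xtilde : Set ℝ := ⋂ j : ℕ, (P.f^[j]) ⁻¹' P.Xstar

/-- `D`: the set of one-sided limits of `f` at the points of `Δ`. -/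
def D : Set ℝ :=
  {L | ∃ c ∈ P.Delta,
    ((𝓝[P.X ∩ Set.Iio c] c).NeBot ∧ Filter.Tendsto P.f (𝓝[P.X ∩ Set.Iio c] c) (𝓝 L)) ∨
    ((𝓝[P.X ∩ Set.Ioi c] c).NeBot ∧ Filter.Tendsto P.f (𝓝[P.X ∩ Set.Ioi c] c) (𝓝 L))}

/-- A set `A` is `f`-pseudo-invariant if for every `x ∈ A` at least one of the
one-sided limits of `f` at `x` belongs to `A`. -/
def PseudoInvariant (A : Set ℝ) : Prop :=
  ∀ x ∈ A,
    (∃ L ∈ A, (𝓝[P.X ∩ Set.Iio x] x).NeBot ∧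
      Filter.Tendsto P.f (𝓝[P.X ∩ Set.Iio x] x) (𝓝 L)) ∨
    (∃ L ∈ A, (𝓝[P.X ∩ Set.Ioi x] x).NeBot ∧
      Filter.Tendsto P.f (𝓝[P.X ∩ Set.Ioi x] x) (𝓝 L))

/-- `f` is piecewise monotonic: strictly monotone on each contraction piece. -/
def PiecewiseMonotonic : Prop :=
  ∀ i, StrictMonoOn P.f (P.piece i) ∨ StrictAntiOn P.f (P.piece i)

/-- `f` satisfies the separation property: it is piecewise monotonic and the closures
of the images of distinct pieces are disjoint. -/
def SeparationProperty : Prop :=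
  P.PiecewiseMonotonic ∧
    ∀ i j, i ≠ j → closure (P.f '' P.piece i) ∩ closure (P.f '' P.piece j) = ∅

/-- The iterates `Λ_n` defining the attractor: `Λ_0 = X`,
`Λ_{n+1} = cl (f (Λ_n \ Δ))`. -/
def LambdaIter : (P : PCIM) → ℕ → Set ℝ
  | Q, 0 => Q.X
  | Q, n + 1 => closure (Q.f '' (LambdaIter Q n \ Q.Delta))

/-- The attractor `Λ = ⋂_{n ≥ 1} Λ_n`. -/
def Lambda : Set ℝ := ⋂ n : ℕ, P.LambdaIter (n + 1)

/-- The atom associated to the word `w = [i₁, …, iₙ]`: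
`A_{i₁…iₙ} = F_{iₙ} ∘ ⋯ ∘ F_{i₁}(X)` where `F_i(A) = cl (f (A ∩ X_i))`. -/
def atomOf (w : List (Fin P.N)) : Set ℝ :=
  w.foldl (fun A i => closure (P.f '' (A ∩ P.piece i))) P.X

/-- `𝒜_n`: the set of (nonempty) atoms of generation `n`. -/
def atoms (n : ℕ) : Set (Set ℝ) :=
  {A | ∃ w : List (Fin P.N), w.length = n ∧ P.atomOf w = A ∧ A.Nonempty}

/-- `θ` is the itinerary of `x`: `f^t(x) ∈ X_{θ_t}` for all `t`. -/
def IsItinerary (x : ℝ) (θ : ℕ → Fin P.N) : Prop :=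
  ∀ t : ℕ, P.f^[t] x ∈ P.piece (θ t)

/-- The word `θ_t θ_{t+1} … θ_{t+n-1}` of length `n` of the sequence `θ`. -/
def word (θ : ℕ → Fin P.N) (t n : ℕ) : List (Fin P.N) :=
  (List.range n).map fun k => θ (t + k)

/-- `L_n(θ)`: the set of words of length `n` occurring in `θ`. -/
def lang (θ : ℕ → Fin P.N) (n : ℕ) : Set (List (Fin P.N)) :=
  {w | ∃ t : ℕ, w = P.word θ t n}

/-- The complexity function `p_θ(n) = #L_n(θ)`. -/
noncomputable def complexity (θ : ℕ → Fin P.N) (n : ℕ) : ℕ := (P.lang θ n).ncard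

/-- The forward orbit of `x` under `f`. -/
def orbit (x : ℝ) : Set ℝ := {y | ∃ k : ℕ, P.f^[k] x = y}

/-- The ω-limit set of `x` under `f`. -/
def omegaLimitSet (x : ℝ) : Set ℝ :=
  ⋂ n : ℕ, closure {y | ∃ m : ℕ, n ≤ m ∧ P.f^[m] x = y}

/-- A compact pseudo-invariant set `A` is `X̃`-minimal if the orbit of every point
of `A ∩ X̃` is dense in `A`. -/
def XtildeMinimal (A : Set ℝ) : Prop :=
  IsCompact A ∧ P.PseudoInvariant A ∧ ∀ x ∈ A ∩ P.Xtilde, A ⊆ closure (P.orbit x)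

/-- A periodic orbit contained in `X̃`. -/
def IsPeriodicOrbit (A : Set ℝ) : Prop :=
  ∃ x ∈ P.Xtilde, ∃ p : ℕ, 1 ≤ p ∧ P.f^[p] x = x ∧ A = P.orbit x

end PCIM

/-- A Cantor set: nonempty, compact, perfect and totally disconnected. -/
def IsCantorSet (A : Set ℝ) : Prop :=
  A.Nonempty ∧ IsCompact A ∧ Perfect A ∧ IsTotallyDisconnected A


/-- `ℓ(E, ε)`: the smallest number of intervals of diameter at most `ε`
needed to cover `E`. -/
noncomputable def coveringNumber (E : Set ℝ) (ε : ℝ) : ℕ :=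
  sInf {k : ℕ | ∃ c : Fin k → Set ℝ,
    (∀ i, (c i).OrdConnected ∧ Metric.diam (c i) ≤ ε) ∧ E ⊆ ⋃ i, c i}


namespace PCIM

variable (P : PCIM)

lemma X_nonempty : P.X.Nonempty := Set.nonempty_Icc.2 P.hab.le

lemma X_isClosed : IsClosed P.X := isClosed_Icc

lemma X_isBounded : Bornology.IsBounded P.X := Metric.isBounded_Icc _ _

lemma X_ordConnected : P.X.OrdConnected := Set.ordConnected_Icc

lemma piece_subset_X (i : Fin P.N) : P.piece i ⊆ P.X := by
  obtain ⟨c, d, h⟩ := P.piece_interval i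
  rw [h]; exact Set.inter_subset_right

lemma piece_ordConnected (i : Fin P.N) : (P.piece i).OrdConnected := by
  obtain ⟨c, d, h⟩ := P.piece_interval i
  rw [h]; exact Set.ordConnected_Ioo.inter Set.ordConnected_Icc

lemma f_continuousOn_piece (i : Fin P.N) : ContinuousOn P.f (P.piece i) := by
  have : LipschitzOnWith (Real.toNNReal P.lam) P.f (P.piece i) := by
    apply LipschitzOnWith.of_dist_le_mul
    intro x hx y hy
    rw [Real.dist_eq, Real.dist_eq, Real.coe_toNNReal _ P.hlam₀.le]
    exact P.contract i x hx y hy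
  exact this.continuousOn

lemma atom_nil : P.atomOf [] = P.X := rfl

lemma atom_concat (u : List (Fin P.N)) (i : Fin P.N) :
    P.atomOf (u ++ [i]) = closure (P.f '' (P.atomOf u ∩ P.piece i)) := by
  unfold atomOf
  rw [List.foldl_concat]

lemma atom_subset_X (w : List (Fin P.N)) : P.atomOf w ⊆ P.X := by
  induction w using List.reverseRecOn with
  | nil => exact le_refl _
  | append_singleton u i ih =>
    rw [P.atom_concat]
    refine closure_minimal ?_ P.X_isClosed
    rintro y ⟨x, hx, rfl⟩
    exact P.mapsTo (ih hx.1)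

lemma atom_isBounded (w : List (Fin P.N)) : Bornology.IsBounded (P.atomOf w) :=
  P.X_isBounded.subset (P.atom_subset_X w)

lemma atom_ordConnected (w : List (Fin P.N)) : (P.atomOf w).OrdConnected := by
  induction w using List.reverseRecOn with
  | nil => exact P.X_ordConnected
  | append_singleton u i ih =>
    rw [P.atom_concat]
    have h1 : (P.atomOf u ∩ P.piece i).OrdConnected := ih.inter (P.piece_ordConnected i)
    have h2 : IsPreconnected (P.f '' (P.atomOf u ∩ P.piece i)) :=
      h1.isPreconnected.image _ ((P.f_continuousOn_piece i).mono Set.inter_subset_right)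
    exact h2.closure.ordConnected

lemma atom_diam (w : List (Fin P.N)) :
    Metric.diam (P.atomOf w) ≤ P.lam ^ w.length * (P.b - P.a) := by
  induction w using List.reverseRecOn with
  | nil =>
    rw [P.atom_nil]
    simp [X, Real.diam_Icc P.hab.le]
  | append_singleton u i ih =>
    rw [P.atom_concat, Metric.diam_closure]
    have hS : Bornology.IsBounded (P.atomOf u ∩ P.piece i) :=
      (P.atom_isBounded u).subset Set.inter_subset_left
    have hd : ∀ x ∈ P.f '' (P.atomOf u ∩ P.piece i), ∀ y ∈ P.f '' (P.atomOf u ∩ P.piece i),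
        dist x y ≤ P.lam * Metric.diam (P.atomOf u) := by
      rintro _ ⟨x, hx, rfl⟩ _ ⟨y, hy, rfl⟩
      have h1 : dist (P.f x) (P.f y) ≤ P.lam * dist x y := by
        rw [Real.dist_eq, Real.dist_eq]
        exact P.contract i x hx.2 y hy.2
      refine h1.trans (mul_le_mul_of_nonneg_left ?_ P.hlam₀.le)
      exact (Metric.dist_le_diam_of_mem hS hx hy).trans
        (Metric.diam_mono Set.inter_subset_left (P.atom_isBounded u))
    have := Metric.diam_le_of_forall_dist_le
      (mul_nonneg P.hlam₀.le Metric.diam_nonneg) hd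
    refine this.trans ?_
    calc P.lam * Metric.diam (P.atomOf u) ≤ P.lam * (P.lam ^ u.length * (P.b - P.a)) :=
          mul_le_mul_of_nonneg_left ih P.hlam₀.le
      _ = P.lam ^ (u ++ [i]).length * (P.b - P.a) := by
          rw [List.length_append, List.length_singleton, pow_succ]; ring

end PCIM


section SepGeom

/-- interior of a subsingleton subset of ℝ is empty -/
lemma subsingleton_interior_empty {S : Set ℝ} (h : S.Subsingleton) : interior S = ∅ := by
  rcases h.eq_empty_or_singleton with rfl | ⟨a, rfl⟩
  · simp
  · exact interior_singleton a

/-- if every element of U is ≤ every element of V, then the closures have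
disjoint interiors -/
lemma half_sep {U V : Set ℝ} (h : ∀ u ∈ U, ∀ v ∈ V, u ≤ v) :
    interior (closure U) ∩ interior (closure V) = ∅ := by
  rcases U.eq_empty_or_nonempty with rfl | ⟨u0, hu0⟩
  · simp
  rcases V.eq_empty_or_nonempty with rfl | ⟨v0, hv0⟩
  · simp
  have hbdd : BddAbove U := ⟨v0, fun u hu => h u hu v0 hv0⟩
  set m := sSup U with hm
  have hU : closure U ⊆ Set.Iic m :=
    closure_minimal (fun u hu => le_csSup hbdd hu) isClosed_Iic
  have hV : closure V ⊆ Set.Ici m :=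
    closure_minimal (fun v hv => csSup_le ⟨u0, hu0⟩ (fun u hu => h u hu v hv)) isClosed_Ici
  apply Set.eq_empty_of_subset_empty
  intro x hx
  have h1 : x ∈ Set.Iio m := by
    have := interior_mono hU hx.1; rwa [interior_Iic] at this
  have h2 : x ∈ Set.Ioi m := by
    have := interior_mono hV hx.2; rwa [interior_Ici] at this
  exact absurd (h1.trans h2) (lt_irrefl x)

/-- two ordConnected bounded sets with disjoint interiors are ordered or degenerate -/
lemma sep_interval {S T : Set ℝ} (hS : S.OrdConnected) (hT : T.OrdConnected)
    (hSb : Bornology.IsBounded S) (hTb : Bornology.IsBounded T)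
    (hdis : interior S ∩ interior T = ∅) :
    S.Subsingleton ∨ T.Subsingleton ∨ (∀ s ∈ S, ∀ t ∈ T, s ≤ t) ∨
      (∀ t ∈ T, ∀ s ∈ S, t ≤ s) := by
  by_cases hSsub : S.Subsingleton
  · exact Or.inl hSsub
  by_cases hTsub : T.Subsingleton
  · exact Or.inr (Or.inl hTsub)
  rw [Set.not_subsingleton_iff] at hSsub hTsub
  obtain ⟨x1, hx1, x2, hx2, hx12⟩ := hSsub
  obtain ⟨y1, hy1, y2, hy2, hy12⟩ := hTsub
  have hSne : S.Nonempty := ⟨x1, hx1⟩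
  have hTne : T.Nonempty := ⟨y1, hy1⟩
  have hSbdda := hSb.bddAbove
  have hSbddb := hSb.bddBelow
  have hTbdda := hTb.bddAbove
  have hTbddb := hTb.bddBelow
  have hiS : sInf S < sSup S := by
    rcases hx12.lt_or_gt with h | h
    · exact lt_of_le_of_lt (csInf_le hSbddb hx1) (h.trans_le (le_csSup hSbdda hx2))
    · exact lt_of_le_of_lt (csInf_le hSbddb hx2) (h.trans_le (le_csSup hSbdda hx1))
  have hiT : sInf T < sSup T := by
    rcases hy12.lt_or_gt with h | h
    · exact lt_of_le_of_lt (csInf_le hTbddb hy1) (h.trans_le (le_csSup hTbdda hy2))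
    · exact lt_of_le_of_lt (csInf_le hTbddb hy2) (h.trans_le (le_csSup hTbdda hy1))
  have hintS : Set.Ioo (sInf S) (sSup S) ⊆ interior S := by
    intro z hz
    obtain ⟨s1, hs1, hs1z⟩ := exists_lt_of_csInf_lt hSne hz.1
    obtain ⟨s2, hs2, hzs2⟩ := exists_lt_of_lt_csSup hSne hz.2
    exact mem_interior.2 ⟨Set.Ioo s1 s2, fun p hp => hS.out hs1 hs2 ⟨hp.1.le, hp.2.le⟩,
      isOpen_Ioo, ⟨hs1z, hzs2⟩⟩
  have hintT : Set.Ioo (sInf T) (sSup T) ⊆ interior T := by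
    intro z hz
    obtain ⟨s1, hs1, hs1z⟩ := exists_lt_of_csInf_lt hTne hz.1
    obtain ⟨s2, hs2, hzs2⟩ := exists_lt_of_lt_csSup hTne hz.2
    exact mem_interior.2 ⟨Set.Ioo s1 s2, fun p hp => hT.out hs1 hs2 ⟨hp.1.le, hp.2.le⟩,
      isOpen_Ioo, ⟨hs1z, hzs2⟩⟩
  by_cases hST : ∀ s ∈ S, ∀ t ∈ T, s ≤ t
  · exact Or.inr (Or.inr (Or.inl hST))
  by_cases hTS : ∀ t ∈ T, ∀ s ∈ S, t ≤ s
  · exact Or.inr (Or.inr (Or.inr hTS))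
  exfalso
  push_neg at hST hTS
  obtain ⟨s, hs, t, ht, hts⟩ := hST
  obtain ⟨t', ht', s', hs', hst⟩ := hTS
  have h1 : sInf T < sSup S := lt_of_le_of_lt (csInf_le hTbddb ht)
    (hts.trans_le (le_csSup hSbdda hs))
  have h2 : sInf S < sSup T := lt_of_le_of_lt (csInf_le hSbddb hs')
    (hst.trans_le (le_csSup hTbdda ht'))
  obtain ⟨z, hz1, hz2⟩ := exists_between (show max (sInf S) (sInf T) <
      min (sSup S) (sSup T) from max_lt (lt_min hiS h2) (lt_min h1 hiT))
  have hzS : z ∈ interior S := hintS ⟨(le_max_left _ _).trans_lt hz1,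
    hz2.trans_le (min_le_left _ _)⟩
  have hzT : z ∈ interior T := hintT ⟨(le_max_right _ _).trans_lt hz1,
    hz2.trans_le (min_le_right _ _)⟩
  exact absurd (hdis ▸ (Set.mem_inter hzS hzT)) (Set.notMem_empty z)

end SepGeom

namespace PCIM

variable (P : PCIM)

/-- main separation step: images of interior-disjoint subsets of one piece
under f have closures with disjoint interiors -/
lemma step_sep (hmono : P.PiecewiseMonotonic) (i : Fin P.N) {S T : Set ℝ}
    (hSp : S ⊆ P.piece i) (hTp : T ⊆ P.piece i)
    (hS : S.OrdConnected) (hT : T.OrdConnected)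
    (hdis : interior S ∩ interior T = ∅) :
    interior (closure (P.f '' S)) ∩ interior (closure (P.f '' T)) = ∅ := by
  have hSb : Bornology.IsBounded S := P.X_isBounded.subset (hSp.trans (P.piece_subset_X i))
  have hTb : Bornology.IsBounded T := P.X_isBounded.subset (hTp.trans (P.piece_subset_X i))
  rcases sep_interval hS hT hSb hTb hdis with h | h | h | h
  · rw [subsingleton_interior_empty (h.image P.f).closure]; simp
  · rw [subsingleton_interior_empty (h.image P.f).closure, Set.inter_empty]
  · rcases hmono i with hm | hm
    · refine half_sep ?_
      rintro _ ⟨s, hsS, rfl⟩ _ ⟨t, htT, rfl⟩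
      exact hm.monotoneOn (hSp hsS) (hTp htT) (h s hsS t htT)
    · rw [Set.inter_comm]
      refine half_sep ?_
      rintro _ ⟨t, htT, rfl⟩ _ ⟨s, hsS, rfl⟩
      exact hm.antitoneOn (hSp hsS) (hTp htT) (h s hsS t htT)
  · rcases hmono i with hm | hm
    · rw [Set.inter_comm]
      refine half_sep ?_
      rintro _ ⟨t, htT, rfl⟩ _ ⟨s, hsS, rfl⟩
      exact hm.monotoneOn (hTp htT) (hSp hsS) (h t htT s hsS)
    · refine half_sep ?_
      rintro _ ⟨s, hsS, rfl⟩ _ ⟨t, htT, rfl⟩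
      exact hm.antitoneOn (hTp htT) (hSp hsS) (h t htT s hsS)

lemma atom_interior_disjoint (hsep : P.SeparationProperty) :
    ∀ n : ℕ, ∀ w w' : List (Fin P.N), w.length = n → w'.length = n → w ≠ w' →
      interior (P.atomOf w) ∩ interior (P.atomOf w') = ∅ := by
  intro n
  induction n with
  | zero =>
    intro w w' hw hw' hne
    rw [List.length_eq_zero_iff] at hw hw'
    exact absurd (hw.trans hw'.symm) hne
  | succ n ih =>
    intro w w' hw hw' hne
    rcases List.eq_nil_or_concat w with rfl | ⟨u, i, rfl⟩
    · simp at hw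
    rcases List.eq_nil_or_concat w' with rfl | ⟨u', i', rfl⟩
    · simp at hw'
    simp only [List.concat_eq_append] at hw hw' hne ⊢
    rw [List.length_append, List.length_singleton] at hw hw'
    have hu : u.length = n := by omega
    have hu' : u'.length = n := by omega
    rw [P.atom_concat, P.atom_concat]
    by_cases hii : i = i'
    · subst hii
      have hune : u ≠ u' := by rintro rfl; exact hne rfl
      refine P.step_sep hsep.1 i Set.inter_subset_right Set.inter_subset_right
        ((P.atom_ordConnected u).inter (P.piece_ordConnected i))
        ((P.atom_ordConnected u').inter (P.piece_ordConnected i)) ?_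
      apply Set.eq_empty_of_subset_empty
      intro x hx
      have h1 : x ∈ interior (P.atomOf u) := interior_mono Set.inter_subset_left hx.1
      have h2 : x ∈ interior (P.atomOf u') := interior_mono Set.inter_subset_left hx.2
      exact (ih u u' hu hu' hune) ▸ Set.mem_inter h1 h2
    · have h1 : closure (P.f '' (P.atomOf u ∩ P.piece i)) ⊆ closure (P.f '' P.piece i) :=
        closure_mono (Set.image_mono Set.inter_subset_right)
      have h2 : closure (P.f '' (P.atomOf u' ∩ P.piece i')) ⊆ closure (P.f '' P.piece i') :=
        closure_mono (Set.image_mono Set.inter_subset_right)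
      apply Set.eq_empty_of_subset_empty
      intro x hx
      have := Set.mem_inter (h1 (interior_subset hx.1)) (h2 (interior_subset hx.2))
      rw [hsep.2 i i' hii] at this
      exact this

end PCIM


lemma ordConnected_Ioo_subset {S : Set ℝ} (hS : S.OrdConnected) (hne : S.Nonempty)
    (hb : Bornology.IsBounded S) : Set.Ioo (sInf S) (sSup S) ⊆ S := by
  intro z hz
  obtain ⟨s1, hs1, hs1z⟩ := exists_lt_of_csInf_lt hne hz.1
  obtain ⟨s2, hs2, hzs2⟩ := exists_lt_of_lt_csSup hne hz.2
  exact hS.out hs1 hs2 ⟨hs1z.le, hzs2.le⟩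

namespace PCIM

variable (P : PCIM)

lemma Delta_finite : P.Delta.Finite := by
  have h : P.Delta ⊆ ⋃ i, (closure (P.piece i) \ P.piece i) := by
    intro x hx
    have hxX : x ∈ ⋃ i, closure (P.piece i) := by
      rw [← P.cover]; exact hx.1
    obtain ⟨s, ⟨i, rfl⟩, hxs⟩ := hxX
    exact Set.mem_iUnion.2 ⟨i, hxs, fun hmem => hx.2 (Set.mem_iUnion.2 ⟨i, hmem⟩)⟩
  refine Set.Finite.subset (Set.finite_iUnion fun i => ?_) h
  have hb : Bornology.IsBounded (P.piece i) := P.X_isBounded.subset (P.piece_subset_X i)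
  have hord := P.piece_ordConnected i
  have hne := P.piece_nonempty i
  have h1 : closure (P.piece i) ⊆ Set.Icc (sInf (P.piece i)) (sSup (P.piece i)) :=
    closure_minimal (fun z hz => ⟨csInf_le hb.bddBelow hz, le_csSup hb.bddAbove hz⟩)
      isClosed_Icc
  have h2 : closure (P.piece i) \ P.piece i ⊆ {sInf (P.piece i), sSup (P.piece i)} := by
    intro z hz
    rcases h1 hz.1 with ⟨hz1, hz2⟩
    rcases hz1.lt_or_eq with hlt1 | heq1
    · rcases hz2.lt_or_eq with hlt2 | heq2
      · exact absurd (ordConnected_Ioo_subset hord hne hb ⟨hlt1, hlt2⟩) hz.2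
      · exact Or.inr heq2
    · exact Or.inl heq1.symm
  exact (Set.finite_singleton _ |>.insert _).subset h2

lemma exists_delta_interior_aux {A : Set ℝ} (hA : A.OrdConnected) (hAX : A ⊆ P.X)
    {i j : Fin P.N} {x y : ℝ} (hij : i ≠ j) (hx : x ∈ A ∩ P.piece i)
    (hy : y ∈ A ∩ P.piece j) (hxy : x < y) :
    ∃ c ∈ P.Delta, c ∈ interior A := by
  by_cases hdel : ∃ c ∈ Set.Ioo x y, c ∈ P.Delta
  · obtain ⟨c, hc, hcD⟩ := hdel
    exact ⟨c, hcD, mem_interior.2 ⟨Set.Ioo x y,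
      fun p hp => hA.out hx.1 hy.1 ⟨hp.1.le, hp.2.le⟩, isOpen_Ioo, hc⟩⟩
  exfalso
  push_neg at hdel
  -- every point of [x,y] lies in some piece
  have hIccX : Set.Icc x y ⊆ P.X := fun z hz => P.X_ordConnected.out (hAX hx.1) (hAX hy.1) hz
  have hIcc : ∀ z ∈ Set.Icc x y, z ∈ P.Xstar := by
    intro z hz
    by_contra hzs
    have hzD : z ∈ P.Delta := ⟨hIccX hz, hzs⟩
    rcases hz.1.lt_or_eq with h1 | h1
    · rcases hz.2.lt_or_eq with h2 | h2
      · exact hdel z ⟨h1, h2⟩ hzD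
      · exact hzs (Set.mem_iUnion.2 ⟨j, h2 ▸ hy.2⟩)
    · exact hzs (Set.mem_iUnion.2 ⟨i, h1 ▸ hx.2⟩)
  choose cc dd hcd using P.piece_interval
  set u : Set ℝ := Set.Ioo (cc i) (dd i) with hu
  set v : Set ℝ := ⋃ j' ∈ {j' : Fin P.N | j' ≠ i}, Set.Ioo (cc j') (dd j') with hv
  have hcover : Set.Icc x y ⊆ u ∪ v := by
    intro z hz
    obtain ⟨k, hk⟩ := Set.mem_iUnion.1 (hIcc z hz)
    rw [hcd k] at hk
    by_cases hki : k = i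
    · exact Or.inl (by rw [hu, ← hki]; exact hk.1)
    · exact Or.inr (Set.mem_biUnion hki hk.1)
  have hxu : (Set.Icc x y ∩ u).Nonempty := by
    refine ⟨x, Set.left_mem_Icc.2 hxy.le, ?_⟩
    have := hx.2; rw [hcd i] at this; exact this.1
  have hyv : (Set.Icc x y ∩ v).Nonempty := by
    refine ⟨y, Set.right_mem_Icc.2 hxy.le, ?_⟩
    have := hy.2; rw [hcd j] at this
    exact Set.mem_biUnion hij.symm this.1
  obtain ⟨z, hzI, hzu, hzv⟩ := isPreconnected_Icc (a := x) (b := y) u v isOpen_Ioo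
    (isOpen_biUnion fun _ _ => isOpen_Ioo) hcover hxu hyv
  obtain ⟨k, hki, hzk⟩ := Set.mem_iUnion₂.1 hzv
  have hzX : z ∈ P.X := hIccX hzI
  have hzi : z ∈ P.piece i := by rw [hcd i]; exact ⟨hzu, hzX⟩
  have hzk' : z ∈ P.piece k := by rw [hcd k]; exact ⟨hzk, hzX⟩
  exact Set.disjoint_left.1 (P.piece_disjoint k i hki) hzk' hzi

lemma exists_delta_interior {A : Set ℝ} (hA : A.OrdConnected) (hAX : A ⊆ P.X)
    {i j : Fin P.N} (hij : i ≠ j) (hi : (A ∩ P.piece i).Nonempty)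
    (hj : (A ∩ P.piece j).Nonempty) :
    ∃ c ∈ P.Delta, c ∈ interior A := by
  obtain ⟨x, hx⟩ := hi
  obtain ⟨y, hy⟩ := hj
  have hxy : x ≠ y := by
    rintro rfl
    exact Set.disjoint_left.1 (P.piece_disjoint i j hij) hx.2 hy.2
  rcases hxy.lt_or_gt with h | h
  · exact P.exists_delta_interior_aux hA hAX hij hx hy h
  · exact P.exists_delta_interior_aux hA hAX hij.symm hy hx h

lemma atoms_zero : P.atoms 0 = {P.X} := by
  ext A
  constructor
  · rintro ⟨w, hw, rfl, hne⟩
    rw [List.length_eq_zero_iff] at hw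
    subst hw
    rfl
  · rintro rfl
    exact ⟨[], rfl, rfl, P.X_nonempty⟩

lemma atoms_succ_subset (n : ℕ) :
    P.atoms (n + 1) ⊆ (fun p : Set ℝ × Fin P.N => closure (P.f '' (p.1 ∩ P.piece p.2))) ''
      {p : Set ℝ × Fin P.N | p.1 ∈ P.atoms n ∧ (p.1 ∩ P.piece p.2).Nonempty} := by
  rintro A ⟨w, hwlen, rfl, hAne⟩
  rcases List.eq_nil_or_concat w with rfl | ⟨u, i, rfl⟩
  · simp at hwlen
  simp only [List.concat_eq_append] at hwlen hAne ⊢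
  rw [List.length_append, List.length_singleton] at hwlen
  rw [P.atom_concat] at hAne ⊢
  have hSne : (P.atomOf u ∩ P.piece i).Nonempty :=
    ((closure_nonempty_iff.1 hAne)).of_image
  exact ⟨(P.atomOf u, i), ⟨⟨u, by omega, rfl, hSne.mono Set.inter_subset_left⟩, hSne⟩, rfl⟩

lemma atoms_finite (n : ℕ) : (P.atoms n).Finite := by
  induction n with
  | zero => rw [P.atoms_zero]; exact Set.finite_singleton _
  | succ n ih =>
    refine Set.Finite.subset (Set.Finite.image _ ?_) (P.atoms_succ_subset n)
    exact (ih.prod (Set.finite_univ)).subset (fun p hp => ⟨hp.1, Set.mem_univ _⟩)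

lemma atoms_mem_ordConnected {n : ℕ} {A : Set ℝ} (hA : A ∈ P.atoms n) : A.OrdConnected := by
  obtain ⟨w, _, rfl, _⟩ := hA; exact P.atom_ordConnected w

lemma atoms_mem_subset_X {n : ℕ} {A : Set ℝ} (hA : A ∈ P.atoms n) : A ⊆ P.X := by
  obtain ⟨w, _, rfl, _⟩ := hA; exact P.atom_subset_X w

lemma atoms_card_step (hsep : P.SeparationProperty) (n : ℕ) :
    (P.atoms (n + 1)).ncard ≤ (P.atoms n).ncard + P.Delta.ncard * P.N := by
  classical
  set E : Set (Set ℝ × Fin P.N) :=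
    {p : Set ℝ × Fin P.N | p.1 ∈ P.atoms n ∧ (p.1 ∩ P.piece p.2).Nonempty} with hE
  have hEfin : E.Finite :=
    ((P.atoms_finite n).prod (Set.finite_univ)).subset (fun p hp => ⟨hp.1, Set.mem_univ _⟩)
  have h1 : (P.atoms (n + 1)).ncard ≤ E.ncard := by
    refine le_trans (Set.ncard_le_ncard (P.atoms_succ_subset n) (hEfin.image _)) ?_
    exact Set.ncard_image_le hEfin
  set M : Set (Set ℝ) := {A | A ∈ P.atoms n ∧ ∃ i j : Fin P.N, i ≠ j ∧
    (A ∩ P.piece i).Nonempty ∧ (A ∩ P.piece j).Nonempty} with hM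
  have hMfin : M.Finite := (P.atoms_finite n).subset (fun A hA => hA.1)
  set E₁ : Set (Set ℝ × Fin P.N) := {p ∈ E | p.1 ∉ M} with hE₁
  set E₂ : Set (Set ℝ × Fin P.N) := {p ∈ E | p.1 ∈ M} with hE₂
  have hEunion : E = E₁ ∪ E₂ := by
    ext p
    constructor
    · intro h
      by_cases hp : p.1 ∈ M
      · exact Or.inr ⟨h, hp⟩
      · exact Or.inl ⟨h, hp⟩
    · rintro (⟨h, _⟩ | ⟨h, _⟩) <;> exact h
  have hcard1 : E₁.ncard ≤ (P.atoms n).ncard := by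
    refine Set.ncard_le_ncard_of_injOn Prod.fst (fun p hp => hp.1.1) ?_ (P.atoms_finite n)
    intro p hp q hq hpq
    have h2 : p.2 = q.2 := by
      by_contra hne
      exact hp.2 ⟨hp.1.1, p.2, q.2, hne, hp.1.2, hpq ▸ hq.1.2⟩
    exact Prod.ext hpq h2
  have hcard2 : E₂.ncard ≤ M.ncard * P.N := by
    have hsub : E₂ ⊆ M ×ˢ (Set.univ : Set (Fin P.N)) :=
      fun p hp => ⟨hp.2, Set.mem_univ _⟩
    have heq : (M ×ˢ (Set.univ : Set (Fin P.N))) =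
        ↑(hMfin.toFinset ×ˢ (Finset.univ : Finset (Fin P.N))) := by
      ext p; simp [Set.Finite.mem_toFinset]
    have : (M ×ˢ (Set.univ : Set (Fin P.N))).ncard = M.ncard * P.N := by
      rw [heq, Set.ncard_coe_finset, Finset.card_product, Finset.card_univ,
        Fintype.card_fin, Set.ncard_eq_toFinset_card M hMfin]
    rw [← this]
    exact Set.ncard_le_ncard hsub (by rw [heq]; exact (hMfin.toFinset ×ˢ _).finite_toSet)
  have hMcard : M.ncard ≤ P.Delta.ncard := by
    have hδ : ∀ A ∈ M, ∃ c, c ∈ P.Delta ∧ c ∈ interior A := by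
      rintro A ⟨hA, i, j, hij, hi, hj⟩
      obtain ⟨c, hc1, hc2⟩ := P.exists_delta_interior (P.atoms_mem_ordConnected hA)
        (P.atoms_mem_subset_X hA) hij hi hj
      exact ⟨c, hc1, hc2⟩
    choose! δ hδ1 hδ2 using hδ
    refine Set.ncard_le_ncard_of_injOn δ (fun A hA => hδ1 A hA) ?_ P.Delta_finite
    intro A hA B hB hAB
    by_contra hne
    obtain ⟨w, hwl, hwA, _⟩ := hA.1
    obtain ⟨w', hwl', hwB, _⟩ := hB.1
    have hww : w ≠ w' := by rintro rfl; exact hne (hwA ▸ hwB ▸ rfl)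
    have hdis := P.atom_interior_disjoint hsep n w w' hwl hwl' hww
    rw [hwA, hwB] at hdis
    exact Set.notMem_empty (δ A) (hdis ▸ Set.mem_inter (hδ2 A hA) (hAB ▸ hδ2 B hB))
  calc (P.atoms (n + 1)).ncard ≤ E.ncard := h1
    _ ≤ E₁.ncard + E₂.ncard := by
        rw [hEunion]; exact Set.ncard_union_le _ _
    _ ≤ (P.atoms n).ncard + P.Delta.ncard * P.N := by
        have := hMcard
        have h2 : E₂.ncard ≤ P.Delta.ncard * P.N :=
          hcard2.trans (Nat.mul_le_mul_right _ hMcard)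
        omega

lemma atoms_card (hsep : P.SeparationProperty) (n : ℕ) :
    (P.atoms n).ncard ≤ 1 + n * (P.Delta.ncard * P.N) := by
  induction n with
  | zero => rw [P.atoms_zero]; simp
  | succ n ih =>
    have := P.atoms_card_step hsep n
    have h2 : (n + 1) * (P.Delta.ncard * P.N) = n * (P.Delta.ncard * P.N) +
      P.Delta.ncard * P.N := by ring
    omega

end PCIM


namespace PCIM

variable (P : PCIM)

lemma atom_isClosed (w : List (Fin P.N)) : IsClosed (P.atomOf w) := by
  induction w using List.reverseRecOn with
  | nil => exact P.X_isClosed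
  | append_singleton u i ih => rw [P.atom_concat]; exact isClosed_closure

lemma LambdaIter_subset_X (n : ℕ) : P.LambdaIter n ⊆ P.X := by
  induction n with
  | zero => exact le_refl _
  | succ n ih =>
    show closure (P.f '' (P.LambdaIter n \ P.Delta)) ⊆ P.X
    refine closure_minimal ?_ P.X_isClosed
    rintro y ⟨x, hx, rfl⟩
    exact P.mapsTo (ih hx.1)

lemma Lambda_subset_iter (n : ℕ) : P.Lambda ⊆ P.LambdaIter n := by
  cases n with
  | zero => exact (Set.iInter_subset _ 0).trans (P.LambdaIter_subset_X 1)
  | succ n => exact Set.iInter_subset _ n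

lemma LambdaIter_subset_atoms (n : ℕ) : P.LambdaIter n ⊆ ⋃ A ∈ P.atoms n, A := by
  induction n with
  | zero =>
    rw [P.atoms_zero]
    intro x hx
    simpa [LambdaIter] using hx
  | succ n ih =>
    show closure (P.f '' (P.LambdaIter n \ P.Delta)) ⊆ _
    have hclosed : IsClosed (⋃ A ∈ P.atoms (n + 1), A) := by
      refine (P.atoms_finite (n + 1)).isClosed_biUnion ?_
      rintro A ⟨w, _, rfl, _⟩
      exact P.atom_isClosed w
    refine closure_minimal ?_ hclosed
    rintro y ⟨z, hz, rfl⟩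
    obtain ⟨A, hA, hzA⟩ := Set.mem_iUnion₂.1 (ih hz.1)
    obtain ⟨w, hwlen, hwA, hAne⟩ := hA
    have hzX : z ∈ P.X := P.LambdaIter_subset_X n hz.1
    have hzstar : z ∈ P.Xstar := by
      by_contra h
      exact hz.2 ⟨hzX, h⟩
    obtain ⟨i, hi⟩ := Set.mem_iUnion.1 hzstar
    have hmem : P.f z ∈ P.atomOf (w ++ [i]) := by
      rw [P.atom_concat]
      exact subset_closure ⟨z, ⟨hwA ▸ hzA, hi⟩, rfl⟩
    refine Set.mem_iUnion₂.2 ⟨P.atomOf (w ++ [i]), ⟨w ++ [i], ?_, rfl, ⟨_, hmem⟩⟩, hmem⟩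
    rw [List.length_append, List.length_singleton, hwlen]

lemma cov_le (n : ℕ) :
    coveringNumber P.Lambda (P.lam ^ n * (P.b - P.a)) ≤ (P.atoms n).ncard := by
  classical
  apply Nat.sInf_le
  have hfin := P.atoms_finite n
  have hcard : (P.atoms n).ncard = hfin.toFinset.card :=
    Set.ncard_eq_toFinset_card _ hfin
  refine ⟨fun k => ((hfin.toFinset.equivFin.symm (Fin.cast hcard k) : hfin.toFinset) : Set ℝ),
    ?_, ?_⟩
  · intro k
    have hmem : ((hfin.toFinset.equivFin.symm (Fin.cast hcard k) : hfin.toFinset) : Set ℝ)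
        ∈ P.atoms n := by
      have := (hfin.toFinset.equivFin.symm (Fin.cast hcard k)).2
      rwa [Set.Finite.mem_toFinset] at this
    obtain ⟨w, hwlen, hwA, _⟩ := hmem
    constructor
    · show (((hfin.toFinset.equivFin.symm (Fin.cast hcard k) : hfin.toFinset)) :
        Set ℝ).OrdConnected
      rw [← hwA]; exact P.atom_ordConnected w
    · show Metric.diam (((hfin.toFinset.equivFin.symm (Fin.cast hcard k) : hfin.toFinset)) :
        Set ℝ) ≤ P.lam ^ n * (P.b - P.a)
      rw [← hwA]; exact hwlen ▸ P.atom_diam w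
  · intro x hx
    obtain ⟨A, hA, hxA⟩ := Set.mem_iUnion₂.1
      (P.LambdaIter_subset_atoms n (P.Lambda_subset_iter n hx))
    have hAF : A ∈ hfin.toFinset := (Set.Finite.mem_toFinset hfin).2 hA
    refine Set.mem_iUnion.2 ⟨Fin.cast hcard.symm (hfin.toFinset.equivFin ⟨A, hAF⟩), ?_⟩
    have h1 : Fin.cast hcard (Fin.cast hcard.symm (hfin.toFinset.equivFin ⟨A, hAF⟩)) =
        hfin.toFinset.equivFin ⟨A, hAF⟩ := by
      ext; rfl
    rw [h1, Equiv.symm_apply_apply]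
    exact hxA

end PCIM

/-- Under the separation property and `D ⊆ X̃`, the lower box
dimension of the attractor `Λ` is zero:
`liminf_{ε→0⁺} log ℓ(Λ,ε) / log (1/ε) = 0`. -/
theorem lowerBoxDim_attractor_eq_zero (P : PCIM)
    (hsep : P.SeparationProperty) (hD : P.D ⊆ P.Xtilde) :
    Filter.liminf
      (fun ε : ℝ => Real.log (coveringNumber P.Lambda ε) / Real.log (1 / ε))
      (𝓝[>] (0 : ℝ)) = 0 := by
  classical
  set g : ℝ → ℝ := fun ε : ℝ =>
    Real.log (coveringNumber P.Lambda ε) / Real.log (1 / ε) with hg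
  set d : ℝ := P.b - P.a with hd
  have hd0 : 0 < d := sub_pos.2 P.hab
  set C : ℕ := P.Delta.ncard * P.N with hC
  have hlog : Real.log P.lam < 0 := Real.log_neg P.hlam₀ P.hlam₁
  set L : ℝ := -Real.log P.lam with hL
  have hL0 : 0 < L := by rw [hL]; linarith
  set ε : ℕ → ℝ := fun n => P.lam ^ n * d with hε
  have hε0 : ∀ n, 0 < ε n := fun n => mul_pos (pow_pos P.hlam₀ n) hd0
  have hden : ∀ n : ℕ, Real.log (1 / ε n) = L * n - Real.log d := by
    intro n
    rw [one_div, Real.log_inv, hε]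
    simp only []
    rw [Real.log_mul (pow_ne_zero n P.hlam₀.ne') hd0.ne', Real.log_pow, hL]
    push_cast; ring
  have hcov : ∀ n : ℕ, (coveringNumber P.Lambda (ε n) : ℝ) ≤ ((n : ℝ) + 2) * ((C : ℝ) + 1) := by
    intro n
    have h1 : coveringNumber P.Lambda (ε n) ≤ 1 + n * C := (P.cov_le n).trans (P.atoms_card hsep n)
    have h2 : (coveringNumber P.Lambda (ε n) : ℝ) ≤ 1 + (n : ℝ) * C := by exact_mod_cast h1
    have h3 : (1 : ℝ) + (n : ℝ) * C ≤ ((n : ℝ) + 2) * ((C : ℝ) + 1) := by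
      have hn : (0 : ℝ) ≤ (n : ℝ) := Nat.cast_nonneg n
      have hc : (0 : ℝ) ≤ (C : ℝ) := Nat.cast_nonneg C
      nlinarith
    exact h2.trans h3
  have hnum : ∀ n : ℕ, Real.log (coveringNumber P.Lambda (ε n)) ≤
      Real.log (((n : ℝ) + 2) * ((C : ℝ) + 1)) := by
    intro n
    have hone : (1 : ℝ) ≤ ((n : ℝ) + 2) * ((C : ℝ) + 1) := by
      have hn : (0 : ℝ) ≤ (n : ℝ) := Nat.cast_nonneg n
      have hc : (0 : ℝ) ≤ (C : ℝ) := Nat.cast_nonneg C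
      nlinarith
    rcases Nat.eq_zero_or_pos (coveringNumber P.Lambda (ε n)) with h | h
    · rw [h]
      simpa using Real.log_nonneg hone
    · exact Real.log_le_log (by exact_mod_cast h) (hcov n)
  have hdenT : Filter.Tendsto (fun n : ℕ => L * (n : ℝ) - Real.log d) atTop atTop := by
    have h1 : Filter.Tendsto (fun n : ℕ => L * (n : ℝ)) atTop atTop :=
      (tendsto_natCast_atTop_atTop (R := ℝ)).const_mul_atTop hL0
    have := tendsto_atTop_add_const_right atTop (-Real.log d) h1
    simpa [sub_eq_add_neg] using this
  have hT1 : Filter.Tendsto (fun n : ℕ => Real.log ((n : ℝ) + 2) / (L * (n : ℝ) - Real.log d))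
      atTop (𝓝 0) := by
    have hcomp : Filter.Tendsto (fun n : ℕ => (n : ℝ) + 2) atTop atTop :=
      tendsto_atTop_add_const_right atTop 2 (tendsto_natCast_atTop_atTop (R := ℝ))
    have h0 := (Real.tendsto_pow_log_div_mul_add_atTop L (-(2 * L) - Real.log d) 1
      hL0.ne').comp hcomp
    refine h0.congr fun n => ?_
    simp only [Function.comp_apply, pow_one]
    have : L * ((n : ℝ) + 2) + (-(2 * L) - Real.log d) = L * (n : ℝ) - Real.log d := by ring
    rw [this]
  have hT2 : Filter.Tendsto (fun n : ℕ => Real.log ((C : ℝ) + 1) / (L * (n : ℝ) - Real.log d))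
      atTop (𝓝 0) := Filter.Tendsto.div_atTop tendsto_const_nhds hdenT
  have hsum : Filter.Tendsto (fun n : ℕ => Real.log ((n : ℝ) + 2) / (L * (n : ℝ) - Real.log d)
      + Real.log ((C : ℝ) + 1) / (L * (n : ℝ) - Real.log d)) atTop (𝓝 0) := by
    have := hT1.add hT2
    simpa using this
  have hgε : Filter.Tendsto (fun n : ℕ => g (ε n)) atTop (𝓝 0) := by
    have hevpos : ∀ᶠ n : ℕ in atTop, 0 < L * (n : ℝ) - Real.log d :=
      hdenT.eventually_gt_atTop 0
    refine tendsto_of_tendsto_of_tendsto_of_le_of_le' tendsto_const_nhds hsum ?_ ?_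
    · filter_upwards [hevpos] with n hn
      rw [hg]
      simp only []
      rw [hden n]
      exact div_nonneg (Real.log_natCast_nonneg _) hn.le
    · filter_upwards [hevpos] with n hn
      rw [hg]
      simp only []
      rw [hden n]
      have h1 : Real.log (coveringNumber P.Lambda (ε n)) / (L * (n : ℝ) - Real.log d) ≤
          Real.log (((n : ℝ) + 2) * ((C : ℝ) + 1)) / (L * (n : ℝ) - Real.log d) :=
        (div_le_div_iff_of_pos_right hn).2 (hnum n)
      refine h1.trans ?_
      rw [Real.log_mul (by positivity) (by positivity), add_div]
  have hmap : Filter.Tendsto ε atTop (𝓝[>] (0 : ℝ)) := by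
    rw [tendsto_nhdsWithin_iff]
    constructor
    · have h1 := tendsto_pow_atTop_nhds_zero_of_lt_one P.hlam₀.le P.hlam₁
      have := h1.mul_const d
      simpa using this
    · exact Filter.Eventually.of_forall fun n => hε0 n
  have hev0 : ∀ᶠ x in 𝓝[>] (0 : ℝ), 0 ≤ g x := by
    filter_upwards [Ioo_mem_nhdsGT_of_mem (Set.left_mem_Ico.2 one_pos)] with x hx
    rw [hg]
    simp only []
    refine div_nonneg (Real.log_natCast_nonneg _) (Real.log_nonneg ?_)
    rw [le_div_iff₀ hx.1, one_mul]
    exact hx.2.le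
  have hbdd : Filter.IsBoundedUnder (· ≥ ·) (𝓝[>] (0 : ℝ)) g :=
    ⟨0, Filter.eventually_map.2 hev0⟩
  have hfreq : ∀ c : ℝ, 0 < c → ∃ᶠ x in 𝓝[>] (0 : ℝ), g x ≤ c := by
    intro c hc
    exact hmap.frequently ((hgε.eventually (eventually_le_nhds hc)).frequently)
  have hcob : Filter.IsCoboundedUnder (· ≥ ·) (𝓝[>] (0 : ℝ)) g :=
    Filter.IsCoboundedUnder.of_frequently_le (hfreq 1 one_pos)
  have hub : Filter.liminf g (𝓝[>] (0 : ℝ)) ≤ 0 := by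
    refine le_of_forall_gt_imp_ge_of_dense fun c hc => ?_
    exact Filter.liminf_le_of_frequently_le (hfreq c hc) hbdd
  have hlb : (0 : ℝ) ≤ Filter.liminf g (𝓝[>] (0 : ℝ)) :=
    Filter.le_liminf_of_le hcob hev0
  exact le_antisymm hub hlb
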